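/- Let A be a randomized algorithm that takes a dataset in 𝒳^n and outputs a function f : 𝒳^n → ℝ of sensitivity c, with the output ranging over a finite set of such functions. Let S be a random dataset chosen according to the product distribution 𝒫^n over 𝒳^n and let f = A(S). (i) If for β ≥ 0 and τ > 0 the β-approximate max-information satisfies I_∞^β(S; f) ≤ (log e) · τ²/(c² n), then Pr[ f(S) − E_{S'∼𝒫^n}[f(S')] ≥ τ ] ≤ exp( −τ²/(c² n) ) + β. (ii) In particular, if A is τ²/(c² n²)-differentially private then Pr[ f(S) − E_{S'∼𝒫^n}[f(S')] ≥ τ ] ≤ exp( −τ²/(c² n) ). -/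

import Mathlib

open scoped ENNReal

/-- Probability of an event under a PMF. -/
noncomputable def pr {Z : Type*} (p : PMF Z) (O : Set Z) : ℝ≥0∞ :=
  p.toOuterMeasure O

/-- Product of two independent PMFs. -/
noncomputable def pmfPair {A B : Type*} (p : PMF A) (q : PMF B) : PMF (A × B) :=
  p.bind fun a => q.map fun b => (a, b)

/-- Joint distribution of (input, output). -/
noncomputable def joint {A B : Type*} (μ : PMF A) (f : A → PMF B) : PMF (A × B) :=
  μ.bind fun a => (f a).map fun b => (a, b)

/-- Product of the marginals of input and output. -/
noncomputable def indepProd {A B : Type*} (μ : PMF A) (f : A → PMF B) : PMF (A × B) :=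
  pmfPair μ (μ.bind f)

/-- `D_∞^δ(p ‖ q) ≤ k` (δ-approximate max-divergence, log base 2). -/
def approxDivLe {Z : Type*} (p q : PMF Z) (δ k : ℝ) : Prop :=
  ∀ O : Set Z, ENNReal.ofReal δ < pr p O →
    pr p O - ENNReal.ofReal δ ≤ (2 : ℝ≥0∞) ^ k * pr q O

/-- `I_∞^β(S; f(S)) ≤ k` for `S ∼ μ`. -/
def approxMaxInfoLe {A B : Type*} (μ : PMF A) (f : A → PMF B) (β k : ℝ) : Prop :=
  approxDivLe (joint μ f) (indepProd μ f) β k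

/-- Two datasets are adjacent if they differ in a single element. -/
def Adjacent {X : Type*} {n : ℕ} (S S' : Fin n → X) : Prop :=
  ∃ i : Fin n, ∀ j : Fin n, j ≠ i → S j = S' j

/-- ε-differential privacy: for all adjacent datasets `S, S'` and every output `y`,
`Pr[A(S) = y] ≤ e^ε · Pr[A(S') = y]`. -/
def DiffPrivate {X Y : Type*} {n : ℕ} (A : (Fin n → X) → PMF Y) (ε : ℝ) : Prop :=
  ∀ S S' : Fin n → X, Adjacent S S' → ∀ y : Y,
    A S y ≤ ENNReal.ofReal (Real.exp ε) * A S' y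

/-- The distribution of `n` i.i.d. samples from `P`. -/
noncomputable def iid {X : Type*} (P : PMF X) : (n : ℕ) → PMF (Fin n → X)
  | 0 => PMF.pure fun i => i.elim0
  | n + 1 => (iid P n).bind fun S => P.map fun x => Fin.cons x S

/-- A function `f : 𝒳^n → ℝ` has sensitivity `c`: changing a single coordinate
changes the value by at most `c`. -/
def Sensitivity {X : Type*} {n : ℕ} (f : (Fin n → X) → ℝ) (c : ℝ) : Prop :=
  ∀ (S : Fin n → X) (i : Fin n) (x' : X), f S - f (Function.update S i x') ≤ c

/-- The expectation of `g` under a PMF `μ` on a finite type. -/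
noncomputable def pmfExp {Z : Type*} [Fintype Z] (μ : PMF Z) (g : Z → ℝ) : ℝ :=
  ∑ z : Z, (μ z).toReal * g z

open Real

lemma pmf_fin_sum {Z : Type*} [Fintype Z] (p : PMF Z) : ∑ z : Z, p z = 1 := by
  rw [← tsum_fintype (L := SummationFilter.unconditional Z)]; exact p.tsum_coe

lemma w_nonneg {Z : Type*} (p : PMF Z) (z : Z) : 0 ≤ (p z).toReal := ENNReal.toReal_nonneg

lemma w_sum {Z : Type*} [Fintype Z] (p : PMF Z) : ∑ z : Z, (p z).toReal = 1 := by
  rw [← ENNReal.toReal_sum (fun a _ => p.apply_ne_top a), pmf_fin_sum p, ENNReal.toReal_one]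

lemma pmf_eq_ofReal {Z : Type*} (p : PMF Z) (z : Z) :
    p z = ENNReal.ofReal ((p z).toReal) := by
  rw [ENNReal.ofReal_toReal (p.apply_ne_top z)]

lemma pr_eq_sum {Z : Type*} [Fintype Z] (p : PMF Z) (O : Set Z) :
    pr p O = ∑ z : Z, O.indicator p z := by
  rw [pr, PMF.toOuterMeasure_apply, tsum_fintype]

lemma pr_le_one {Z : Type*} [Fintype Z] (p : PMF Z) (O : Set Z) : pr p O ≤ 1 := by
  rw [pr_eq_sum]
  calc ∑ z : Z, O.indicator p z ≤ ∑ z : Z, p z :=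
        Finset.sum_le_sum fun z _ => Set.indicator_apply_le (fun _ => le_rfl)
  _ = 1 := pmf_fin_sum p

lemma map_pair_apply_self {A B : Type*} (q : PMF B) (a : A) (f : B) :
    (q.map fun b => (a, b)) (a, f) = q f := by
  classical
  rw [PMF.map_apply]
  refine (tsum_congr fun b => ?_).trans (tsum_ite_eq f (fun _ => q f))
  by_cases hb : b = f
  · subst hb; simp
  · simp [Prod.mk.injEq, hb, Ne.symm hb]

lemma map_pair_apply_ne {A B : Type*} (q : PMF B) {a s : A} (h : a ≠ s) (f : B) :
    (q.map fun b => (a, b)) (s, f) = 0 := by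
  classical
  rw [PMF.map_apply]
  refine (tsum_congr fun b => ?_).trans tsum_zero
  simp [Prod.mk.injEq, Ne.symm h]

lemma joint_apply {A B : Type*} (μ : PMF A) (K : A → PMF B) (s : A) (f : B) :
    joint μ K (s, f) = μ s * K s f := by
  classical
  rw [joint, PMF.bind_apply]
  have h1 : ∀ a, μ a * (PMF.map (fun b => (a, b)) (K a)) (s, f)
      = if a = s then μ s * K s f else 0 := by
    intro a
    by_cases h : a = s
    · subst h
      rw [map_pair_apply_self, if_pos rfl]
    · rw [map_pair_apply_ne _ h, mul_zero, if_neg h]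
  rw [tsum_congr h1]
  exact tsum_ite_eq s _

lemma pmfPair_apply {A B : Type*} (p : PMF A) (q : PMF B) (s : A) (f : B) :
    pmfPair p q (s, f) = p s * q f :=
  joint_apply p (fun _ => q) s f

lemma indepProd_apply {A B : Type*} (μ : PMF A) (K : A → PMF B) (s : A) (f : B) :
    indepProd μ K (s, f) = μ s * (μ.bind K) f :=
  pmfPair_apply μ (μ.bind K) s f

lemma iid_cons_apply {X : Type*} (P : PMF X) (n : ℕ) (x : X) (S : Fin n → X) :
    iid P (n + 1) (Fin.cons x S) = iid P n S * P x := by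
  classical
  rw [iid, PMF.bind_apply]
  have h1 : ∀ S', iid P n S' * (PMF.map (fun y => (Fin.cons y S' : Fin (n+1) → X)) P) (Fin.cons x S)
      = if S' = S then iid P n S * P x else 0 := by
    intro S'
    rw [PMF.map_apply]
    split_ifs with h
    · rw [h]
      congr 1
      refine (tsum_congr fun y => ?_).trans (tsum_ite_eq x (fun _ => P x))
      by_cases hy : y = x
      · subst hy; simp
      · simp [Fin.cons_inj, hy, Ne.symm hy]
    · refine mul_eq_zero_of_right _ ((tsum_congr fun y => ?_).trans tsum_zero)
      rw [if_neg]
      rw [Fin.cons_inj]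
      rintro ⟨-, h3⟩
      exact h h3.symm
  rw [tsum_congr h1]
  exact tsum_ite_eq S _

lemma sum_cons_decomp {X M : Type*} [Fintype X] [AddCommMonoid M] {n : ℕ}
    (g : (Fin (n + 1) → X) → M) :
    ∑ T : Fin (n + 1) → X, g T = ∑ x : X, ∑ S : Fin n → X, g (Fin.cons x S) := by
  calc ∑ T : Fin (n + 1) → X, g T = ∑ p : X × (Fin n → X), g (Fin.cons p.1 p.2) :=
        (Fintype.sum_equiv (Fin.consEquiv fun _ => X)
          (fun p => g (Fin.cons p.1 p.2)) g (fun p => rfl)).symm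
  _ = _ := Fintype.sum_prod_type (f := fun p : X × (Fin n → X) => g (Fin.cons p.1 p.2))

lemma pmfExp_pure {Z : Type*} [Fintype Z] (d : Z) (g : Z → ℝ) :
    pmfExp (PMF.pure d) g = g d := by
  rw [pmfExp, Finset.sum_eq_single d]
  · rw [PMF.pure_apply_self, ENNReal.toReal_one, one_mul]
  · intro z _ hz
    rw [PMF.pure_apply_of_ne _ _ hz, ENNReal.toReal_zero, zero_mul]
  · intro h; exact absurd (Finset.mem_univ d) h

lemma pmfExp_cons {X : Type*} [Fintype X] (P : PMF X) (n : ℕ) (g : (Fin (n+1) → X) → ℝ) :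
    pmfExp (iid P (n + 1)) g
      = ∑ S : Fin n → X, (iid P n S).toReal * ∑ x : X, (P x).toReal * g (Fin.cons x S) := by
  rw [pmfExp, sum_cons_decomp (fun T => (iid P (n+1) T).toReal * g T), Finset.sum_comm]
  congr 1
  ext S
  rw [Finset.mul_sum]
  congr 1
  ext x
  rw [iid_cons_apply, ENNReal.toReal_mul]
  ring


section Hoeffding

lemma hoeffding_core {p : ℝ} (hp0 : 0 ≤ p) (hp1 : p ≤ 1) (u : ℝ) :
    (1 - p) * exp (-p * u) + p * exp ((1 - p) * u) ≤ exp (u ^ 2 / 8) := by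
  set D : ℝ → ℝ := fun u => 1 - p + p * exp u with hDdef
  have hD : ∀ u, 0 < D u := by
    intro u
    have h1 : (0:ℝ) < 1 - p + p * exp u := by
      rcases eq_or_lt_of_le hp0 with h | h
      · simp [← h]
      · have := mul_pos h (exp_pos u)
        linarith
    simpa [hDdef] using h1
  set G : ℝ → ℝ := fun u => p * exp u / D u with hGdef
  have hG0 : ∀ u, 0 ≤ G u := fun u => div_nonneg (by positivity) (hD u).le
  have hG1 : ∀ u, G u ≤ 1 := by
    intro u
    rw [hGdef, div_le_one (hD u)]
    simp only [hDdef]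
    nlinarith [exp_pos u]
  have hDd : ∀ u, HasDerivAt D (p * exp u) u := by
    intro u
    exact ((Real.hasDerivAt_exp u).const_mul p).const_add (1 - p)
  set F : ℝ → ℝ := fun u => u ^ 2 / 8 + p * u - Real.log (D u) with hFdef
  set F' : ℝ → ℝ := fun u => u / 4 + p - G u with hF'def
  have hFd : ∀ u, HasDerivAt F (F' u) u := by
    intro u
    have h1 : HasDerivAt (fun u : ℝ => u ^ 2 / 8 + p * u) (u / 4 + p) u := by
      have := ((hasDerivAt_pow 2 u).div_const 8).add ((hasDerivAt_id u).const_mul p)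
      convert this using 1
      · rfl
      · rfl
      · rfl
      · norm_num; ring
    have h2 : HasDerivAt (fun u => Real.log (D u)) (G u) u := by
      simpa [hGdef] using (hDd u).log (hD u).ne'
    exact h1.sub h2
  have hF'd : ∀ u, HasDerivAt F' (1 / 4 - G u * (1 - G u)) u := by
    intro u
    have h1 : HasDerivAt (fun u : ℝ => u / 4 + p) (1 / 4) u := by
      simpa using ((hasDerivAt_id u).div_const 4).add_const p
    have h2 : HasDerivAt G (G u * (1 - G u)) u := by
      have hq : HasDerivAt G ((p * exp u * D u - p * exp u * (p * exp u)) / D u ^ 2) u :=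
        ((Real.hasDerivAt_exp u).const_mul p).div (hDd u) (hD u).ne'
      have hne : D u ≠ 0 := (hD u).ne'
      have heq : (p * exp u * D u - p * exp u * (p * exp u)) / D u ^ 2 = G u * (1 - G u) := by
        simp only [hGdef]
        field_simp
      rw [heq] at hq
      exact hq
    exact h1.sub h2
  have hF'mono : Monotone F' := by
    apply monotone_of_deriv_nonneg (fun u => (hF'd u).differentiableAt)
    intro u
    rw [(hF'd u).deriv]
    nlinarith [hG0 u, hG1 u, sq_nonneg (G u - 1/2)]
  have hF'0 : F' 0 = 0 := by
    simp [hF'def, hGdef, hDdef]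
  have hF0 : F 0 = 0 := by
    simp [hFdef, hDdef]
  have hFdiff : Differentiable ℝ F := fun x => (hFd x).differentiableAt
  have hFnonneg : ∀ u, 0 ≤ F u := by
    intro u
    rcases le_total 0 u with h | h
    · have hm : MonotoneOn F (Set.Ici 0) := by
        apply monotoneOn_of_deriv_nonneg (convex_Ici 0) hFdiff.continuous.continuousOn
          (fun x _ => (hFd x).differentiableAt.differentiableWithinAt)
        intro x hx
        rw [(hFd x).deriv, ← hF'0]
        exact hF'mono (le_of_lt (by simpa using hx))
      have h2 := hm Set.self_mem_Ici (Set.mem_Ici.mpr h) h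
      rw [hF0] at h2
      exact h2
    · have hm : AntitoneOn F (Set.Iic 0) := by
        apply antitoneOn_of_deriv_nonpos (convex_Iic 0) hFdiff.continuous.continuousOn
          (fun x _ => (hFd x).differentiableAt.differentiableWithinAt)
        intro x hx
        rw [(hFd x).deriv, ← hF'0]
        exact hF'mono (le_of_lt (by simpa using hx))
      have h2 := hm (Set.mem_Iic.mpr h) Set.self_mem_Iic h
      rw [hF0] at h2
      exact h2
  have hlog : Real.log (D u) ≤ u ^ 2 / 8 + p * u := by
    have h := hFnonneg u
    simp only [hFdef] at h
    linarith
  have key : D u ≤ exp (u ^ 2 / 8 + p * u) :=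
    calc D u = exp (Real.log (D u)) := (exp_log (hD u)).symm
    _ ≤ _ := exp_le_exp.mpr hlog
  have expand : (1 - p) * exp (-p * u) + p * exp ((1 - p) * u) = exp (-p * u) * D u := by
    simp only [hDdef]
    rw [mul_add, show (1-p)*u = -p*u + u by ring, Real.exp_add]
    ring
  rw [expand]
  calc exp (-p * u) * D u ≤ exp (-p * u) * exp (u ^ 2 / 8 + p * u) :=
        mul_le_mul_of_nonneg_left key (exp_pos _).le
  _ = exp (u ^ 2 / 8) := by rw [← Real.exp_add]; ring_nf

lemma hoeffding_sum {X : Type*} [Fintype X] [Nonempty X] (w : X → ℝ)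
    (hw0 : ∀ x, 0 ≤ w x) (hw1 : ∑ x, w x = 1) (Z : X → ℝ)
    (hmean : ∑ x, w x * Z x = 0) {c : ℝ} (hrange : ∀ x y, Z x - Z y ≤ c) (t : ℝ) :
    ∑ x, w x * exp (t * Z x) ≤ exp (t ^ 2 * c ^ 2 / 8) := by
  have hc0 : 0 ≤ c := by
    have := hrange (Classical.arbitrary X) (Classical.arbitrary X)
    simpa using this
  have hne : (Finset.univ : Finset X).Nonempty := Finset.univ_nonempty
  set a := Finset.univ.inf' hne Z with hadef
  set b := Finset.univ.sup' hne Z with hbdef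
  have ha : ∀ x, a ≤ Z x := fun x => Finset.inf'_le _ (Finset.mem_univ x)
  have hb : ∀ x, Z x ≤ b := fun x => Finset.le_sup' _ (Finset.mem_univ x)
  have hba : b - a ≤ c := by
    obtain ⟨xa, _, hxa⟩ := Finset.exists_mem_eq_inf' hne Z
    obtain ⟨xb, _, hxb⟩ := Finset.exists_mem_eq_sup' hne Z
    rw [hadef, hbdef, hxa, hxb]
    exact hrange xb xa
  have hsum_le : ∀ (g h : X → ℝ), (∀ x, g x ≤ h x) → ∑ x, w x * g x ≤ ∑ x, w x * h x :=
    fun g h hgh => Finset.sum_le_sum fun x _ => mul_le_mul_of_nonneg_left (hgh x) (hw0 x)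
  have ha0 : a ≤ 0 := by
    have h1 : ∑ x, w x * a ≤ ∑ x, w x * Z x := hsum_le _ _ (fun x => ha x)
    rw [hmean] at h1
    have h2 : ∑ x, w x * a = a := by rw [← Finset.sum_mul, hw1, one_mul]
    linarith
  have hb0 : 0 ≤ b := by
    have h1 : ∑ x, w x * Z x ≤ ∑ x, w x * b := hsum_le _ _ (fun x => hb x)
    rw [hmean] at h1
    have h2 : ∑ x, w x * b = b := by rw [← Finset.sum_mul, hw1, one_mul]
    linarith
  have hexp_nonneg : (0:ℝ) ≤ t ^ 2 * c ^ 2 / 8 := by positivity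
  have hab : a ≤ b := le_trans (ha (Classical.arbitrary X)) (hb (Classical.arbitrary X))
  rcases eq_or_lt_of_le hab with hab | hab
  · -- a = b: Z is constant, hence 0
    have hZ : ∀ x, Z x = a := fun x => le_antisymm (hab ▸ hb x) (ha x)
    have haz : a = 0 := by
      have : ∑ x, w x * Z x = a := by
        rw [Finset.sum_congr rfl (fun x _ => by rw [hZ x]), ← Finset.sum_mul, hw1, one_mul]
      rw [hmean] at this
      exact this.symm
    have : ∑ x, w x * exp (t * Z x) = 1 := by
      rw [Finset.sum_congr rfl (fun x _ => by rw [hZ x, haz, mul_zero, Real.exp_zero, mul_one]),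
        hw1]
    rw [this, ← Real.exp_zero]
    exact exp_le_exp.mpr hexp_nonneg
  · have hba0 : (0:ℝ) < b - a := sub_pos.mpr hab
    set p := -a / (b - a) with hpdef
    have hp0 : 0 ≤ p := div_nonneg (neg_nonneg.mpr ha0) hba0.le
    have hp1 : p ≤ 1 := by
      rw [hpdef, div_le_one hba0]
      linarith
    have hpt : ∀ x, exp (t * Z x) ≤
        (b - Z x) / (b - a) * exp (t * a) + (Z x - a) / (b - a) * exp (t * b) := by
      intro x
      have hl1 : (0:ℝ) ≤ (b - Z x) / (b - a) := div_nonneg (by linarith [hb x]) hba0.le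
      have hl2 : (0:ℝ) ≤ (Z x - a) / (b - a) := div_nonneg (by linarith [ha x]) hba0.le
      have hlsum : (b - Z x) / (b - a) + (Z x - a) / (b - a) = 1 := by
        field_simp
        ring
      have hconv := convexOn_exp.2 (Set.mem_univ (t * a)) (Set.mem_univ (t * b)) hl1 hl2 hlsum
      have harg : (b - Z x) / (b - a) * (t * a) + (Z x - a) / (b - a) * (t * b) = t * Z x := by
        field_simp
        ring
      simpa [smul_eq_mul, harg] using hconv
    have step1 : ∑ x, w x * exp (t * Z x) ≤
        ∑ x, w x * ((b - Z x) / (b - a) * exp (t * a) + (Z x - a) / (b - a) * exp (t * b)) :=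
      hsum_le _ _ hpt
    have step2 : ∑ x, w x * ((b - Z x) / (b - a) * exp (t * a) + (Z x - a) / (b - a) * exp (t * b))
        = (1 - p) * exp (t * a) + p * exp (t * b) := by
      have hterm : ∀ x, w x * ((b - Z x) / (b - a) * exp (t * a) + (Z x - a) / (b - a) * exp (t * b))
          = (w x * b - w x * Z x) * (exp (t * a) / (b - a))
            + (w x * Z x - w x * a) * (exp (t * b) / (b - a)) := by
        intro x
        field_simp
      rw [Finset.sum_congr rfl (fun x _ => hterm x), Finset.sum_add_distrib,
        ← Finset.sum_mul, ← Finset.sum_mul, Finset.sum_sub_distrib, Finset.sum_sub_distrib,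
        ← Finset.sum_mul, ← Finset.sum_mul, hw1, hmean]
      rw [hpdef]
      field_simp
      ring
    set u := t * (b - a) with hudef
    have hta : t * a = -p * u := by
      rw [hpdef, hudef]
      field_simp
    have htb : t * b = (1 - p) * u := by
      rw [hpdef, hudef]
      field_simp
      ring
    have step3 : (1 - p) * exp (t * a) + p * exp (t * b) ≤ exp (u ^ 2 / 8) := by
      rw [hta, htb]
      exact hoeffding_core hp0 hp1 u
    have step4 : exp (u ^ 2 / 8) ≤ exp (t ^ 2 * c ^ 2 / 8) := by
      apply exp_le_exp.mpr
      have h1 : (b - a) ^ 2 ≤ c ^ 2 := by nlinarith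
      have : u ^ 2 = t ^ 2 * (b - a) ^ 2 := by rw [hudef]; ring
      rw [this]
      nlinarith [sq_nonneg t]
    calc ∑ x, w x * exp (t * Z x) ≤ _ := step1
    _ = _ := step2
    _ ≤ _ := step3
    _ ≤ _ := step4

end Hoeffding

lemma pmf_nonempty {Z : Type*} (p : PMF Z) : Nonempty Z :=
  ⟨p.support_nonempty.choose⟩

lemma mgf_le {X : Type*} [Fintype X] (P : PMF X) (n : ℕ) :
    ∀ (g : (Fin n → X) → ℝ) (c : ℝ), Sensitivity g c → ∀ t : ℝ,
    pmfExp (iid P n) (fun S => Real.exp (t * (g S - pmfExp (iid P n) g)))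
      ≤ Real.exp (t ^ 2 * (n * c ^ 2) / 8) := by
  induction n with
  | zero =>
    intro g c hs t
    have h0 : iid P 0 = PMF.pure (fun i => i.elim0) := rfl
    rw [h0, pmfExp_pure, pmfExp_pure]
    simp
  | succ n ih =>
    intro g c hs t
    have hX : Nonempty X := pmf_nonempty P
    set w : X → ℝ := fun x => (P x).toReal with hwdef
    set h : (Fin n → X) → ℝ := fun S => ∑ x : X, w x * g (Fin.cons x S) with hhdef
    set E := pmfExp (iid P (n + 1)) g with hEdef
    have hE : E = pmfExp (iid P n) h := by
      rw [hEdef, pmfExp_cons]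
      rfl
    have hsens_h : Sensitivity h c := by
      intro S i x'
      simp only [hhdef]
      rw [← Finset.sum_sub_distrib]
      have hb : ∀ x : X, w x * g (Fin.cons x S) - w x * g (Fin.cons x (Function.update S i x'))
          ≤ w x * c := by
        intro x
        rw [← mul_sub]
        apply mul_le_mul_of_nonneg_left _ (w_nonneg P x)
        have h2 := hs (Fin.cons x S) i.succ x'
        rwa [← Fin.cons_update] at h2
      calc ∑ x : X, (w x * g (Fin.cons x S) - w x * g (Fin.cons x (Function.update S i x')))
          ≤ ∑ x : X, w x * c := Finset.sum_le_sum (fun x _ => hb x)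
      _ = c := by rw [← Finset.sum_mul, w_sum, one_mul]
    have hhoef : ∀ S : Fin n → X,
        ∑ x : X, w x * Real.exp (t * (g (Fin.cons x S) - h S)) ≤ Real.exp (t ^ 2 * c ^ 2 / 8) := by
      intro S
      apply hoeffding_sum w (w_nonneg P) (w_sum P) (fun x => g (Fin.cons x S) - h S)
      · simp only [mul_sub]
        rw [Finset.sum_sub_distrib, ← Finset.sum_mul, w_sum, one_mul]
        simp only [hhdef]
        ring
      · intro x y
        have h2 := hs (Fin.cons x S) 0 y
        rw [Fin.update_cons_zero] at h2
        simpa using h2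
    have step : ∀ S : Fin n → X, ∑ x : X, w x * Real.exp (t * (g (Fin.cons x S) - E))
        ≤ Real.exp (t ^ 2 * c ^ 2 / 8) * Real.exp (t * (h S - E)) := by
      intro S
      have h1 : ∀ x : X, w x * Real.exp (t * (g (Fin.cons x S) - E))
          = Real.exp (t * (h S - E)) * (w x * Real.exp (t * (g (Fin.cons x S) - h S))) := by
        intro x
        rw [mul_left_comm, ← Real.exp_add]
        congr 2
        ring
      rw [Finset.sum_congr rfl (fun x _ => h1 x), ← Finset.mul_sum,
        mul_comm (Real.exp (t ^ 2 * c ^ 2 / 8))]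
      exact mul_le_mul_of_nonneg_left (hhoef S) (Real.exp_pos _).le
    calc pmfExp (iid P (n + 1)) (fun S => Real.exp (t * (g S - E)))
        = ∑ S : Fin n → X, (iid P n S).toReal
            * ∑ x : X, w x * Real.exp (t * (g (Fin.cons x S) - E)) :=
          pmfExp_cons P n _
    _ ≤ ∑ S : Fin n → X, (iid P n S).toReal
          * (Real.exp (t ^ 2 * c ^ 2 / 8) * Real.exp (t * (h S - E))) :=
        Finset.sum_le_sum fun S _ => mul_le_mul_of_nonneg_left (step S) (w_nonneg _ _)
    _ = Real.exp (t ^ 2 * c ^ 2 / 8)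
          * ∑ S : Fin n → X, (iid P n S).toReal * Real.exp (t * (h S - E)) := by
        rw [Finset.mul_sum]
        exact Finset.sum_congr rfl fun S _ => by ring
    _ ≤ Real.exp (t ^ 2 * c ^ 2 / 8) * Real.exp (t ^ 2 * (n * c ^ 2) / 8) := by
        apply mul_le_mul_of_nonneg_left _ (Real.exp_pos _).le
        have h2 := ih h c hsens_h t
        rw [← hE] at h2
        exact h2
    _ = Real.exp (t ^ 2 * (↑(n + 1) * c ^ 2) / 8) := by
        rw [← Real.exp_add]
        congr 1
        push_cast
        ring

lemma mcdiarmid {X : Type*} [Fintype X] (P : PMF X) (n : ℕ) (hn : 0 < n)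
    (g : (Fin n → X) → ℝ) {c : ℝ} (hc : 0 < c) (hs : Sensitivity g c) {τ : ℝ} (hτ : 0 < τ) :
    pr (iid P n) {S | τ ≤ g S - pmfExp (iid P n) g}
      ≤ ENNReal.ofReal (Real.exp (-2 * τ ^ 2 / (n * c ^ 2))) := by
  classical
  set E := pmfExp (iid P n) g with hEdef
  set O : Set (Fin n → X) := {S | τ ≤ g S - E} with hOdef
  have hn' : (0:ℝ) < n := by exact_mod_cast hn
  set t : ℝ := 4 * τ / (n * c ^ 2) with htdef
  have ht0 : 0 < t := by positivity
  set W : (Fin n → X) → ℝ := fun S => (iid P n S).toReal with hWdef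
  have hreal : ∑ S : Fin n → X, O.indicator W S ≤ Real.exp (-2 * τ ^ 2 / (n * c ^ 2)) := by
    have hterm : ∀ S : Fin n → X,
        O.indicator W S ≤ W S * Real.exp (t * (g S - E) - t * τ) := by
      intro S
      by_cases hS : S ∈ O
      · rw [Set.indicator_of_mem hS]
        apply le_mul_of_one_le_right (w_nonneg _ _)
        rw [← Real.exp_zero]
        apply Real.exp_le_exp.mpr
        have : τ ≤ g S - E := hS
        nlinarith
      · rw [Set.indicator_of_notMem hS]
        positivity
    calc ∑ S : Fin n → X, O.indicator W S
        ≤ ∑ S : Fin n → X, W S * Real.exp (t * (g S - E) - t * τ) :=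
          Finset.sum_le_sum fun S _ => hterm S
    _ = Real.exp (-(t * τ)) * ∑ S : Fin n → X, W S * Real.exp (t * (g S - E)) := by
        rw [Finset.mul_sum]
        refine Finset.sum_congr rfl fun S _ => ?_
        rw [mul_left_comm, ← Real.exp_add]
        congr 2
        ring
    _ ≤ Real.exp (-(t * τ)) * Real.exp (t ^ 2 * (n * c ^ 2) / 8) := by
        apply mul_le_mul_of_nonneg_left _ (Real.exp_pos _).le
        exact mgf_le P n g c hs t
    _ = Real.exp (-(t * τ) + t ^ 2 * (n * c ^ 2) / 8) := (Real.exp_add _ _).symm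
    _ = Real.exp (-2 * τ ^ 2 / (n * c ^ 2)) := by
        congr 1
        rw [htdef]
        field_simp
        ring
  have hpr : pr (iid P n) O = ENNReal.ofReal (∑ S : Fin n → X, O.indicator W S) := by
    have h2 : (∑ S : Fin n → X, ENNReal.ofReal (O.indicator W S))
        = ENNReal.ofReal (∑ S : Fin n → X, O.indicator W S) :=
      (ENNReal.ofReal_sum_of_nonneg (f := fun S => O.indicator W S) (fun S _ => Set.indicator_apply_nonneg
        (fun _ => w_nonneg _ _))).symm
    rw [pr_eq_sum, ← h2]
    refine Finset.sum_congr rfl fun S _ => ?_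
    by_cases hS : S ∈ O
    · rw [Set.indicator_of_mem hS, Set.indicator_of_mem hS, hWdef, pmf_eq_ofReal]
    · rw [Set.indicator_of_notMem hS, Set.indicator_of_notMem hS, ENNReal.ofReal_zero]
  rw [hpr]
  exact ENNReal.ofReal_le_ofReal hreal

lemma pr_le_mul_pr {Z : Type*} [Fintype Z] (p q : PMF Z) (C : ℝ≥0∞)
    (h : ∀ z, p z ≤ C * q z) (O : Set Z) : pr p O ≤ C * pr q O := by
  classical
  rw [pr_eq_sum, pr_eq_sum, Finset.mul_sum]
  refine Finset.sum_le_sum fun z _ => ?_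
  by_cases hz : z ∈ O
  · rw [Set.indicator_of_mem hz, Set.indicator_of_mem hz]; exact h z
  · simp [Set.indicator_of_notMem hz]


/-- let `A` be a randomized algorithm outputting (a name `f : F` of) a
`c`-sensitive function `ev f : 𝒳^n → ℝ` from a finite set `F` of such functions,
and let `S ∼ 𝒫^n`, `f = A(S)`.
(i) If `I_∞^β(S; f) ≤ (log₂ e) · τ²/(c²n)` for `β ≥ 0`, `τ > 0`, then
`Pr[ f(S) − E_{S'∼𝒫^n}[f(S')] ≥ τ ] ≤ exp(−τ²/(c²n)) + β`.
(ii) In particular, if `A` is `τ²/(c²n²)`-differentially private then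
`Pr[ f(S) − E_{S'∼𝒫^n}[f(S')] ≥ τ ] ≤ exp(−τ²/(c²n))`. -/
theorem maxInfo_low_sensitivity_generalization
    {X F : Type*} [Fintype X] [Fintype F] {n : ℕ}
    (ev : F → (Fin n → X) → ℝ) (c : ℝ)
    (hsens : ∀ f : F, Sensitivity (ev f) c)
    (P : PMF X) (A : (Fin n → X) → PMF F) (τ β : ℝ) (hτ : 0 < τ) (hβ : 0 ≤ β) :
    (approxMaxInfoLe (iid P n) A β
        (Real.logb 2 (Real.exp 1) * τ ^ 2 / (c ^ 2 * n)) →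
      pr (joint (iid P n) A)
          {p : (Fin n → X) × F | τ ≤ ev p.2 p.1 - pmfExp (iid P n) (ev p.2)}
        ≤ ENNReal.ofReal (Real.exp (-(τ ^ 2) / (c ^ 2 * n)) + β)) ∧
    (DiffPrivate A (τ ^ 2 / (c ^ 2 * n ^ 2)) →
      pr (joint (iid P n) A)
          {p : (Fin n → X) × F | τ ≤ ev p.2 p.1 - pmfExp (iid P n) (ev p.2)}
        ≤ ENNReal.ofReal (Real.exp (-(τ ^ 2) / (c ^ 2 * n)))) := by
  classical
  set O : Set ((Fin n → X) × F) :=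
    {p : (Fin n → X) × F | τ ≤ ev p.2 p.1 - pmfExp (iid P n) (ev p.2)} with hOdef
  rcases em (0 < n ∧ 0 < c) with ⟨hn, hc⟩ | htriv
  · -- main case
    have hn' : (0:ℝ) < (n:ℝ) := by exact_mod_cast hn
    have hne : (n:ℝ) ≠ 0 := hn'.ne'
    have hcne : c ≠ 0 := hc.ne'
    -- McDiarmid-based bound on the independent product
    have hindep : pr (indepProd (iid P n) A) O
        ≤ ENNReal.ofReal (Real.exp (-2 * τ ^ 2 / (↑n * c ^ 2))) := by
      set M := ENNReal.ofReal (Real.exp (-2 * τ ^ 2 / (↑n * c ^ 2))) with hM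
      rw [pr_eq_sum]
      have hz : ∑ z : (Fin n → X) × F, O.indicator (indepProd (iid P n) A) z
          = ∑ f : F, ∑ S : Fin n → X, O.indicator (indepProd (iid P n) A) (S, f) := by
        rw [Fintype.sum_prod_type]
        exact Finset.sum_comm
      rw [hz]
      have hinner : ∀ f : F, ∑ S : Fin n → X, O.indicator (indepProd (iid P n) A) (S, f)
          ≤ ((iid P n).bind A) f * M := by
        intro f
        have h1 : ∀ S, O.indicator (indepProd (iid P n) A) (S, f)
            = ((iid P n).bind A) f
              * ({S | τ ≤ ev f S - pmfExp (iid P n) (ev f)}.indicator (iid P n) S) := by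
          intro S
          by_cases hS : (S, f) ∈ O
          · rw [Set.indicator_of_mem hS,
              Set.indicator_of_mem
                (show S ∈ {S | τ ≤ ev f S - pmfExp (iid P n) (ev f)} from hS),
              indepProd_apply, mul_comm]
          · rw [Set.indicator_of_notMem hS,
              Set.indicator_of_notMem
                (show S ∉ {S | τ ≤ ev f S - pmfExp (iid P n) (ev f)} from hS),
              mul_zero]
        rw [Finset.sum_congr rfl (fun S _ => h1 S), ← Finset.mul_sum]
        apply mul_le_mul_right
        rw [← pr_eq_sum]
        exact mcdiarmid P n hn (ev f) hc (hsens f) hτ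
      calc ∑ f : F, ∑ S : Fin n → X, O.indicator (indepProd (iid P n) A) (S, f)
          ≤ ∑ f : F, ((iid P n).bind A) f * M := Finset.sum_le_sum fun f _ => hinner f
      _ = M := by rw [← Finset.sum_mul, pmf_fin_sum, one_mul]
    have hmulM : ENNReal.ofReal (Real.exp (τ ^ 2 / (c ^ 2 * ↑n)))
          * ENNReal.ofReal (Real.exp (-2 * τ ^ 2 / (↑n * c ^ 2)))
        = ENNReal.ofReal (Real.exp (-(τ ^ 2) / (c ^ 2 * ↑n))) := by
      rw [← ENNReal.ofReal_mul (Real.exp_pos _).le, ← Real.exp_add]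
      congr 2
      field_simp
      ring
    constructor
    · intro hmax
      by_cases hβpr : pr (joint (iid P n) A) O ≤ ENNReal.ofReal β
      · refine hβpr.trans (ENNReal.ofReal_le_ofReal ?_)
        nlinarith [Real.exp_pos (-(τ ^ 2) / (c ^ 2 * (n:ℝ)))]
      · have hlt : ENNReal.ofReal β < pr (joint (iid P n) A) O := lt_of_not_ge hβpr
        have hdiv := hmax O hlt
        have hk : (2 : ℝ≥0∞) ^ (Real.logb 2 (Real.exp 1) * τ ^ 2 / (c ^ 2 * ↑n))
            = ENNReal.ofReal (Real.exp (τ ^ 2 / (c ^ 2 * ↑n))) := by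
          rw [show (2 : ℝ≥0∞) = ENNReal.ofReal 2 by simp,
            ENNReal.ofReal_rpow_of_pos two_pos]
          congr 1
          rw [mul_div_assoc, Real.rpow_mul (by norm_num : (0:ℝ) ≤ 2),
            Real.rpow_logb two_pos (by norm_num) (Real.exp_pos 1), Real.exp_one_rpow]
        have h2 : pr (joint (iid P n) A) O
            ≤ (2 : ℝ≥0∞) ^ (Real.logb 2 (Real.exp 1) * τ ^ 2 / (c ^ 2 * ↑n))
                * pr (indepProd (iid P n) A) O + ENNReal.ofReal β :=
          tsub_le_iff_right.mp hdiv
        refine h2.trans ?_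
        have h3 : (2 : ℝ≥0∞) ^ (Real.logb 2 (Real.exp 1) * τ ^ 2 / (c ^ 2 * ↑n))
              * pr (indepProd (iid P n) A) O
            ≤ ENNReal.ofReal (Real.exp (-(τ ^ 2) / (c ^ 2 * ↑n))) := by
          rw [hk, ← hmulM]
          exact mul_le_mul_right hindep _
        calc (2 : ℝ≥0∞) ^ (Real.logb 2 (Real.exp 1) * τ ^ 2 / (c ^ 2 * ↑n))
              * pr (indepProd (iid P n) A) O + ENNReal.ofReal β
            ≤ ENNReal.ofReal (Real.exp (-(τ ^ 2) / (c ^ 2 * ↑n))) + ENNReal.ofReal β :=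
              add_le_add_left h3 _
        _ = ENNReal.ofReal (Real.exp (-(τ ^ 2) / (c ^ 2 * ↑n)) + β) :=
              (ENNReal.ofReal_add (Real.exp_pos _).le hβ).symm
    · intro hdp
      set ε : ℝ := τ ^ 2 / (c ^ 2 * n ^ 2) with hεdef
      have hε0 : 0 ≤ ε := by positivity
      set C : ℝ≥0∞ := ENNReal.ofReal (Real.exp ε) with hCdef
      have hC1 : 1 ≤ C := by
        rw [hCdef]
        exact ENNReal.one_le_ofReal.mpr (Real.one_le_exp hε0)
      -- group privacy
      have hgroup : ∀ m : ℕ, ∀ S S' : Fin n → X,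
          (∀ j : Fin n, m ≤ (j : ℕ) → S j = S' j) → ∀ f : F, A S f ≤ C ^ m * A S' f := by
        intro m
        induction m with
        | zero =>
          intro S S' hSS f
          have : S = S' := funext fun j => hSS j (Nat.zero_le _)
          rw [this, pow_zero, one_mul]
        | succ m ih =>
          intro S S' hSS f
          by_cases hm : m < n
          · set i : Fin n := ⟨m, hm⟩ with hidef
            set T : Fin n → X := Function.update S i (S' i) with hTdef
            have hadj : Adjacent S T := by
              refine ⟨i, fun j hj => ?_⟩
              rw [hTdef, Function.update_of_ne hj]
            have hstep := hdp S T hadj f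
            have hT : ∀ j : Fin n, m ≤ (j : ℕ) → T j = S' j := by
              intro j hj
              by_cases hji : j = i
              · rw [hji, hTdef, Function.update_self]
              · have hj' : m + 1 ≤ (j : ℕ) := by
                  rcases Nat.lt_or_ge (j : ℕ) (m + 1) with h | h
                  · exfalso
                    apply hji
                    exact Fin.ext (show (j : ℕ) = m by omega)
                  · exact h
                rw [hTdef, Function.update_of_ne hji]
                exact hSS j hj'
            calc A S f ≤ C * A T f := hstep
            _ ≤ C * (C ^ m * A S' f) := mul_le_mul_right (ih T S' hT f) C
            _ = C ^ (m + 1) * A S' f := by rw [← mul_assoc, ← pow_succ']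
          · have hSS' : ∀ j : Fin n, m ≤ (j : ℕ) → S j = S' j := by
              intro j hj
              exfalso
              exact absurd (lt_of_le_of_lt hj j.isLt) hm
            calc A S f ≤ C ^ m * A S' f := ih S S' hSS' f
            _ ≤ C ^ (m + 1) * A S' f := by
                apply mul_le_mul_left
                rw [pow_succ]
                exact le_mul_of_one_le_right' hC1
      have hkey : ∀ (S : Fin n → X) (f : F), A S f ≤ C ^ n * ((iid P n).bind A) f := by
        intro S f
        have h1 : ∀ S', A S f ≤ C ^ n * A S' f := fun S' =>
          hgroup n S S' (fun j hj => absurd (lt_of_le_of_lt hj j.isLt) (lt_irrefl _)) f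
        calc A S f = (∑' S', iid P n S') * A S f := by rw [(iid P n).tsum_coe, one_mul]
        _ = ∑' S', iid P n S' * A S f := ENNReal.tsum_mul_right.symm
        _ ≤ ∑' S', iid P n S' * (C ^ n * A S' f) :=
            ENNReal.tsum_le_tsum fun S' => mul_le_mul_right (h1 S') _
        _ = C ^ n * ∑' S', iid P n S' * A S' f := by
            rw [← ENNReal.tsum_mul_left]
            exact tsum_congr fun S' => by ring
        _ = C ^ n * ((iid P n).bind A) f := by rw [PMF.bind_apply]
      have hjoint_le : ∀ z : (Fin n → X) × F,
          joint (iid P n) A z ≤ C ^ n * indepProd (iid P n) A z := by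
        rintro ⟨S, f⟩
        rw [joint_apply, indepProd_apply]
        calc iid P n S * A S f ≤ iid P n S * (C ^ n * ((iid P n).bind A) f) :=
              mul_le_mul_right (hkey S f) _
        _ = C ^ n * (iid P n S * ((iid P n).bind A) f) := by ring
      have hCn : C ^ n = ENNReal.ofReal (Real.exp (↑n * ε)) := by
        rw [hCdef, ← ENNReal.ofReal_pow (Real.exp_pos _).le, ← Real.exp_nat_mul]
      calc pr (joint (iid P n) A) O ≤ C ^ n * pr (indepProd (iid P n) A) O :=
            pr_le_mul_pr _ _ _ hjoint_le O
      _ ≤ C ^ n * ENNReal.ofReal (Real.exp (-2 * τ ^ 2 / (↑n * c ^ 2))) :=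
          mul_le_mul_right hindep _
      _ = ENNReal.ofReal (Real.exp (↑n * ε) * Real.exp (-2 * τ ^ 2 / (↑n * c ^ 2))) := by
          rw [hCn, ← ENNReal.ofReal_mul (Real.exp_pos _).le]
      _ = ENNReal.ofReal (Real.exp (-(τ ^ 2) / (c ^ 2 * ↑n))) := by
          rw [← Real.exp_add]
          congr 2
          rw [hεdef]
          field_simp
          ring
  · -- trivial case: c ^ 2 * n = 0
    have hcn : c ^ 2 * (n:ℝ) = 0 := by
      rcases Nat.eq_zero_or_pos n with h0 | hpos
      · rw [h0]; simp
      · have hcle : ¬ 0 < c := fun h => htriv ⟨hpos, h⟩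
        obtain ⟨x0⟩ := pmf_nonempty P
        obtain ⟨f0⟩ := pmf_nonempty (A (fun _ => x0))
        have h1 := hsens f0 (fun _ => x0) ⟨0, hpos⟩ x0
        rw [show Function.update (fun _ : Fin n => x0) ⟨0, hpos⟩ x0 = fun _ => x0 from
          Function.update_eq_self _ _] at h1
        have hc0 : 0 ≤ c := by simpa using h1
        have : c = 0 := le_antisymm (not_lt.mp hcle) hc0
        rw [this]
        ring
    have hexp : Real.exp (-(τ ^ 2) / (c ^ 2 * ↑n)) = 1 := by
      rw [hcn, div_zero, Real.exp_zero]
    constructor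
    · intro _
      rw [hexp]
      calc pr (joint (iid P n) A) O ≤ 1 := pr_le_one _ _
      _ ≤ ENNReal.ofReal (1 + β) := by
          rw [show (1:ℝ≥0∞) = ENNReal.ofReal 1 by simp]
          exact ENNReal.ofReal_le_ofReal (by linarith)
    · intro _
      rw [hexp]
      calc pr (joint (iid P n) A) O ≤ 1 := pr_le_one _ _
      _ = ENNReal.ofReal 1 := by simp
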